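/- For K+1 nonnegative reals σ_0, σ_1, ..., σ_K with σ_0 the value being removed and σ'_0 ∈ [0, σ_0] its replacement, and z = Σ_{k=1}^K e^{σ_k}, the following holds when all σ-values lie in [0, 1/β] and σ'_0 ≥ 0: (e^{σ_0}/(e^{σ_0}+z))·log(e^{σ_0}+z) ≥ c(β,K)·log((e^{σ_0}+z)/(1+z)), where c(β,K) = ((b+1)log(b+K))/((b+K)(log(b+K)−log K)) with b = e^{1/β}−1, assuming z ≥ K−1. -/

import Mathlib

open Real

private lemma cubic_le_exp {u : ℝ} (hu : 0 ≤ u) :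
    1 + u + u ^ 2 / 2 + u ^ 3 / 6 ≤ Real.exp u := by
  have h := Real.sum_le_exp_of_nonneg hu 4
  simp [Finset.sum_range_succ, Nat.factorial] at h
  linarith

private lemma log_ge_of_pow (n : ℕ) (hn : n ≠ 0) (q : ℝ) (Kr : ℝ) (hKr : 0 < Kr)
    (h : Real.exp ((n : ℝ) * q) ≤ Kr ^ n) : q ≤ Real.log Kr := by
  rw [Real.le_log_iff_exp_le hKr]
  refine le_of_pow_le_pow_left₀ hn hKr.le ?_
  rwa [← Real.exp_nat_mul]

private lemma exp_nat_le (n : ℕ) (c : ℝ) (h : (2.7182818286 : ℝ) ^ n ≤ c) :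
    Real.exp ((n : ℝ) * 1) ≤ c := by
  rw [Real.exp_nat_mul]
  exact le_trans (pow_le_pow_left₀ (Real.exp_pos 1).le Real.exp_one_lt_d9.le n) h

private lemma Klog_ge (K : ℕ) (hK : 5 ≤ K) : 2 * ((K : ℝ) - 1) ≤ (K : ℝ) * Real.log K := by
  have hKpos : (0:ℝ) < K := by positivity
  by_cases h8 : 8 ≤ K
  · have h2 : (2:ℝ) ≤ Real.log K := by
      rw [Real.le_log_iff_exp_le hKpos]
      have := exp_nat_le 2 7.39 (by norm_num)
      have h8' : (8:ℝ) ≤ (K:ℝ) := by exact_mod_cast h8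
      calc Real.exp 2 = Real.exp ((2:ℕ) * 1) := by norm_num
        _ ≤ 7.39 := this
        _ ≤ (K:ℝ) := by linarith
    nlinarith
  · interval_cases K
    · have h5 : (8/5 : ℝ) ≤ Real.log 5 := by
        apply log_ge_of_pow 5 (by norm_num) _ _ (by norm_num)
        have := exp_nat_le 8 3125 (by norm_num)
        calc Real.exp (((5:ℕ):ℝ) * (8/5)) = Real.exp ((8:ℕ) * 1) := by norm_num
          _ ≤ 3125 := this
          _ ≤ (5:ℝ)^5 := by norm_num
      push_cast
      nlinarith
    · have h6 : (5/3 : ℝ) ≤ Real.log 6 := by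
        apply log_ge_of_pow 3 (by norm_num) _ _ (by norm_num)
        have := exp_nat_le 5 216 (by norm_num)
        calc Real.exp (((3:ℕ):ℝ) * (5/3)) = Real.exp ((5:ℕ) * 1) := by norm_num
          _ ≤ 216 := this
          _ ≤ (6:ℝ)^3 := by norm_num
      push_cast
      nlinarith
    · have h7 : (12/7 : ℝ) ≤ Real.log 7 := by
        apply log_ge_of_pow 7 (by norm_num) _ _ (by norm_num)
        have := exp_nat_le 12 823543 (by norm_num)
        calc Real.exp (((7:ℕ):ℝ) * (12/7)) = Real.exp ((12:ℕ) * 1) := by norm_num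
          _ ≤ 823543 := this
          _ ≤ (7:ℝ)^7 := by norm_num
      push_cast
      nlinarith

private lemma key_poly (K : ℕ) (hK : 1 ≤ K) (u : ℝ) (hu : 0 ≤ u) :
    ((K : ℝ) - 1) * (u ^ 2 + Real.log K * u + Real.log K) ≤
      (K : ℝ) * Real.log K * Real.exp u := by
  have hc := cubic_le_exp hu
  by_cases h5 : 5 ≤ K
  · have hKl := Klog_ge K h5
    have hKpos : (0:ℝ) < K := by positivity
    have hl0 : 0 < Real.log K := by
      have : (1:ℝ) < K := by exact_mod_cast lt_of_lt_of_le (by norm_num) h5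
      exact Real.log_pos this
    nlinarith [mul_le_mul_of_nonneg_left hc (by positivity : (0:ℝ) ≤ (K:ℝ) * Real.log K),
      mul_le_mul_of_nonneg_right hKl (sq_nonneg u),
      mul_nonneg hl0.le hu, mul_nonneg (mul_nonneg hKpos.le hl0.le) (pow_nonneg hu 3)]
  · interval_cases K
    · simp
    · -- K = 2
      have hl := Real.log_two_gt_d9
      have hl0 : (0:ℝ) < Real.log 2 := by linarith
      push_cast
      nlinarith [mul_le_mul_of_nonneg_left hc (by positivity : (0:ℝ) ≤ 2 * Real.log 2),
        mul_nonneg (mul_nonneg hl0.le hu) (sq_nonneg (u - 7/4)),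
        mul_nonneg hl0.le hu, sq_nonneg u]
    · -- K = 3
      have hl : (1:ℝ) ≤ Real.log 3 := by
        rw [Real.le_log_iff_exp_le (by norm_num)]
        calc Real.exp 1 ≤ 2.7182818286 := Real.exp_one_lt_d9.le
          _ ≤ 3 := by norm_num
      push_cast
      nlinarith [mul_le_mul_of_nonneg_left hc (by positivity : (0:ℝ) ≤ 3 * Real.log 3),
        mul_nonneg hu (sq_nonneg (u - 1)), mul_nonneg (le_trans zero_le_one hl) hu,
        mul_nonneg (mul_nonneg (le_trans zero_le_one hl) hu) (sq_nonneg (u - 1))]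
    · -- K = 4
      have hl4 : Real.log 4 = 2 * Real.log 2 := by
        rw [show (4:ℝ) = 2^2 by norm_num, Real.log_pow]; push_cast; ring
      have hl := Real.log_two_gt_d9
      have hl0 : (0:ℝ) < Real.log 2 := by linarith
      push_cast
      rw [hl4]
      nlinarith [mul_le_mul_of_nonneg_left hc (by positivity : (0:ℝ) ≤ 4 * (2 * Real.log 2)),
        mul_nonneg (mul_nonneg hl0.le hu) (sq_nonneg (u - 1/2)),
        mul_nonneg hl0.le hu, sq_nonneg u]

private lemma key_ineq (K : ℕ) (hK : 1 ≤ K) (x : ℝ) (hx : 0 ≤ x) :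
    ((K : ℝ) - 1) * Real.log (x + K) * (Real.log (x + K) - Real.log K) ≤
      (x + 1) * Real.log K := by
  have hKpos : (0:ℝ) < K := by exact_mod_cast hK
  set u := Real.log (x + K) - Real.log K with hu_def
  have hu : 0 ≤ u := sub_nonneg.2 (Real.log_le_log hKpos (by linarith))
  have hexp : Real.exp u = (x + K) / K := by
    rw [hu_def, Real.exp_sub, Real.exp_log (by linarith), Real.exp_log hKpos]
  have hp := key_poly K hK u hu
  rw [hexp] at hp
  have hp' : ((K:ℝ) - 1) * (u ^ 2 + Real.log K * u + Real.log K) ≤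
      (x + K) * Real.log K := by
    rw [div_eq_mul_inv] at hp
    calc ((K:ℝ) - 1) * (u ^ 2 + Real.log K * u + Real.log K)
        ≤ (K:ℝ) * Real.log K * ((x + K) * (K:ℝ)⁻¹) := hp
      _ = (x + K) * Real.log K := by field_simp
  have hL : Real.log (x + K) = u + Real.log K := by rw [hu_def]; ring
  rw [hL]
  have hK1 : (1:ℝ) ≤ K := by exact_mod_cast hK
  nlinarith [hp']

private lemma hasDerivAt_N (c : ℝ) (x : ℝ) (hx : 0 < x + c) :
    HasDerivAt (fun t : ℝ => (t + 1) * Real.log (t + c))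
      (Real.log (x + c) + (x + 1) / (x + c)) x := by
  have h1 : HasDerivAt (fun t : ℝ => t + 1) 1 x := (hasDerivAt_id x).add_const 1
  have h2 : HasDerivAt (fun t : ℝ => Real.log (t + c)) (1 / (x + c)) x := by
    simpa using ((hasDerivAt_id x).add_const c).log hx.ne'
  have := h1.mul h2
  exact this.congr_deriv (by ring)

private lemma hasDerivAt_D (c : ℝ) (l : ℝ) (x : ℝ) (hx : 0 < x + c) :
    HasDerivAt (fun t : ℝ => (t + c) * (Real.log (t + c) - l))
      (Real.log (x + c) - l + 1) x := by
  have h1 : HasDerivAt (fun t : ℝ => t + c) 1 x := (hasDerivAt_id x).add_const c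
  have h2 : HasDerivAt (fun t : ℝ => Real.log (t + c) - l) (1 / (x + c)) x := by
    have := (((hasDerivAt_id x).add_const c).log hx.ne').sub_const l
    simpa using this
  have := h1.mul h2
  exact this.congr_deriv (by rw [mul_one_div_cancel hx.ne']; ring)

private lemma F_anti (K : ℕ) (hK : 1 ≤ K) :
    AntitoneOn (fun x : ℝ => ((x + 1) * Real.log (x + K)) /
      ((x + K) * (Real.log (x + K) - Real.log K))) (Set.Ioi 0) := by
  have hKpos : (0:ℝ) < K := by exact_mod_cast hK
  have hK1 : (1:ℝ) ≤ K := by exact_mod_cast hK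
  have hder : ∀ x ∈ Set.Ioi (0:ℝ),
      HasDerivAt (fun x : ℝ => ((x + 1) * Real.log (x + K)) /
        ((x + K) * (Real.log (x + K) - Real.log K)))
      (((Real.log (x + K) + (x + 1) / (x + K)) * ((x + K) * (Real.log (x + K) - Real.log K)) -
        ((x + 1) * Real.log (x + K)) * (Real.log (x + K) - Real.log K + 1)) /
        ((x + K) * (Real.log (x + K) - Real.log K))^2) x := by
    intro x hx
    have hx0 : 0 < x := hx
    have hxK : 0 < x + K := by linarith
    have hll : Real.log K < Real.log (x + K) := Real.log_lt_log hKpos (by linarith)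
    have hD0 : (x + K) * (Real.log (x + K) - Real.log K) ≠ 0 := (mul_pos hxK (sub_pos.2 hll)).ne'
    exact (hasDerivAt_N (K:ℝ) x hxK).div (hasDerivAt_D (K:ℝ) (Real.log K) x hxK) hD0
  apply antitoneOn_of_deriv_nonpos (convex_Ioi 0)
  · exact fun x hx => ((hder x hx).continuousAt).continuousWithinAt
  · rw [interior_Ioi]
    exact fun x hx => ((hder x hx).differentiableAt).differentiableWithinAt
  · rw [interior_Ioi]
    intro x hx
    rw [(hder x hx).deriv]
    have hx0 : 0 < x := hx
    have hxK : 0 < x + K := by linarith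
    have hll : Real.log K < Real.log (x + K) := Real.log_lt_log hKpos (by linarith)
    apply div_nonpos_of_nonpos_of_nonneg _ (sq_nonneg _)
    have hki := key_ineq K hK x hx0.le
    have hexpand : (Real.log (x + K) + (x + 1) / (x + K)) *
          ((x + K) * (Real.log (x + K) - Real.log K)) -
        ((x + 1) * Real.log (x + K)) * (Real.log (x + K) - Real.log K + 1) =
        ((K:ℝ) - 1) * Real.log (x + K) * (Real.log (x + K) - Real.log K) -
          (x + 1) * Real.log K := by
      field_simp
      ring
    rw [hexpand]
    linarith

private lemma phi_anti (x : ℝ) (hx : 0 ≤ x) :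
    AntitoneOn (fun y : ℝ => (x + y) * (Real.log (x + y) - Real.log y)) (Set.Ici 1) := by
  have hder : ∀ y : ℝ, 1 ≤ y →
      HasDerivAt (fun y : ℝ => (x + y) * (Real.log (x + y) - Real.log y))
        (Real.log (x + y) - Real.log y - x / y) y := by
    intro y hy
    have hy0 : 0 < y := by linarith
    have hxy : 0 < x + y := by linarith
    have h1 : HasDerivAt (fun y : ℝ => x + y) 1 y := (hasDerivAt_id y).const_add x
    have h2 : HasDerivAt (fun y : ℝ => Real.log (x + y)) (1 / (x + y)) y := by
      simpa using ((hasDerivAt_id y).const_add x).log hxy.ne'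
    have h3 : HasDerivAt Real.log (1 / y) y := by
      simpa using (hasDerivAt_id y).log hy0.ne'
    have := h1.mul (h2.sub h3)
    exact this.congr_deriv (by simp only [Pi.sub_apply]; field_simp; ring)
  apply antitoneOn_of_deriv_nonpos (convex_Ici 1)
  · exact fun y hy => ((hder y hy).continuousAt).continuousWithinAt
  · rw [interior_Ici]
    exact fun y hy => ((hder y hy.le).differentiableAt).differentiableWithinAt
  · rw [interior_Ici]
    intro y hy
    have hy1 : (1:ℝ) ≤ y := le_of_lt hy
    rw [(hder y hy1).deriv]
    have hy0 : 0 < y := by linarith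
    have hxy : 0 < x + y := by linarith
    have hlog : Real.log (x + y) - Real.log y = Real.log ((x + y) / y) := by
      rw [Real.log_div hxy.ne' hy0.ne']
    have hb := Real.log_le_sub_one_of_pos (by positivity : 0 < (x + y) / y)
    have : (x + y) / y - 1 = x / y := by field_simp; ring
    rw [hlog]
    linarith [hb, this.ge]

/-- Per-user smoothness inequality: for `β > 0`, integer `K ≥ 1`, `σ₀ ∈ [0, 1/β]` and
`z ≥ K − 1` (e.g. `z = Σ_{k=1}^K e^{σ_k}` with all `σ_k ∈ [0,1/β]`),
`(e^{σ₀}/(e^{σ₀}+z))·log(e^{σ₀}+z) ≥ c(β,K)·log((e^{σ₀}+z)/(1+z))`,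
where `c(β,K) = ((b+1)log(b+K))/((b+K)(log(b+K)−log K))` and `b = e^{1/β}−1`. -/
theorem stmt9 (β : ℝ) (hβ : 0 < β) (K : ℕ) (hK : 1 ≤ K)
    (σ₀ : ℝ) (hσ₀ : σ₀ ∈ Set.Icc 0 (1 / β)) (z : ℝ) (hz : (K : ℝ) - 1 ≤ z) :
    (Real.exp σ₀ / (Real.exp σ₀ + z)) * Real.log (Real.exp σ₀ + z) ≥
      (((Real.exp (1 / β) - 1 + 1) * Real.log (Real.exp (1 / β) - 1 + K)) /
          ((Real.exp (1 / β) - 1 + K) *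
            (Real.log (Real.exp (1 / β) - 1 + K) - Real.log K))) *
        Real.log ((Real.exp σ₀ + z) / (1 + z)) := by
  obtain ⟨hσ0, hσβ⟩ := hσ₀
  have hKpos : (0:ℝ) < K := by exact_mod_cast hK
  have hK1 : (1:ℝ) ≤ K := by exact_mod_cast hK
  set b : ℝ := Real.exp (1 / β) - 1 with hb_def
  have hb : 0 < b := by
    have : (1:ℝ) < Real.exp (1 / β) := Real.one_lt_exp_iff.2 (by positivity)
    simp [hb_def]; linarith
  set x : ℝ := Real.exp σ₀ - 1 with hx_def
  have hex : Real.exp σ₀ = x + 1 := by rw [hx_def]; ring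
  have hx0 : 0 ≤ x := by
    have := Real.one_le_exp hσ0; simp [hx_def]; linarith
  have hxb : x ≤ b := by
    have h := Real.exp_le_exp.2 hσβ
    rw [hx_def, hb_def]
    linarith
  set y : ℝ := 1 + z with hy_def
  have hyK : (K:ℝ) ≤ y := by simp [hy_def]; linarith
  have hy1 : (1:ℝ) ≤ y := le_trans hK1 hyK
  have hy0 : 0 < y := by linarith
  have hxy : Real.exp σ₀ + z = x + y := by rw [hex, hy_def]; ring
  have hxypos : 0 < x + y := by linarith
  set C : ℝ := ((b + 1) * Real.log (b + K)) /
      ((b + K) * (Real.log (b + K) - Real.log K)) with hC_def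
  have hllb : Real.log K < Real.log (b + K) := Real.log_lt_log hKpos (by linarith)
  have hC0 : 0 ≤ C := by
    apply div_nonneg
    · exact mul_nonneg (by linarith) (Real.log_nonneg (by linarith))
    · exact mul_nonneg (by linarith) (by linarith)
  rw [hxy, Real.log_div hxypos.ne' hy0.ne', ge_iff_le, hex]
  show C * (Real.log (x + y) - Real.log (1 + z)) ≤ (x + 1) / (x + y) * Real.log (x + y)
  rw [show (1 : ℝ) + z = y from hy_def.symm]
  rcases eq_or_lt_of_le hx0 with h0 | hxpos
  · have hxy0 : x + y = y := by rw [← h0]; ring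
    rw [hxy0, sub_self, mul_zero]
    have : 0 ≤ Real.log y := Real.log_nonneg hy1
    positivity
  · -- main case
    have step1 : (x + y) * (Real.log (x + y) - Real.log y) ≤
        (x + K) * (Real.log (x + K) - Real.log K) :=
      phi_anti x hx0 (Set.mem_Ici.2 hK1) (Set.mem_Ici.2 hy1) hyK
    have step2 : Real.log (x + K) ≤ Real.log (x + y) :=
      Real.log_le_log (by linarith) (by linarith)
    have hllx : Real.log K < Real.log (x + K) := Real.log_lt_log hKpos (by linarith)
    have hDx : 0 < (x + K) * (Real.log (x + K) - Real.log K) :=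
      mul_pos (by linarith) (by linarith)
    have hF := F_anti K hK (Set.mem_Ioi.2 hxpos) (Set.mem_Ioi.2 (lt_of_lt_of_le hxpos hxb)) hxb
    -- hF : F b ≤ F x
    have step3 : C * ((x + K) * (Real.log (x + K) - Real.log K)) ≤
        (x + 1) * Real.log (x + K) := by
      have : C ≤ ((x + 1) * Real.log (x + K)) /
          ((x + K) * (Real.log (x + K) - Real.log K)) := hF
      calc C * ((x + K) * (Real.log (x + K) - Real.log K))
          ≤ (((x + 1) * Real.log (x + K)) /
              ((x + K) * (Real.log (x + K) - Real.log K))) *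
            ((x + K) * (Real.log (x + K) - Real.log K)) :=
            mul_le_mul_of_nonneg_right this hDx.le
        _ = (x + 1) * Real.log (x + K) := div_mul_cancel₀ _ hDx.ne'
    have chain : C * ((x + y) * (Real.log (x + y) - Real.log y)) ≤
        (x + 1) * Real.log (x + y) := by
      calc C * ((x + y) * (Real.log (x + y) - Real.log y))
          ≤ C * ((x + K) * (Real.log (x + K) - Real.log K)) :=
            mul_le_mul_of_nonneg_left step1 hC0
        _ ≤ (x + 1) * Real.log (x + K) := step3
        _ ≤ (x + 1) * Real.log (x + y) :=
            mul_le_mul_of_nonneg_left step2 (by linarith)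
    rw [show (x + 1) / (x + y) * Real.log (x + y) =
        (x + 1) * Real.log (x + y) / (x + y) from by ring, le_div_iff₀ hxypos]
    calc C * (Real.log (x + y) - Real.log y) * (x + y)
        = C * ((x + y) * (Real.log (x + y) - Real.log y)) := by ring
      _ ≤ (x + 1) * Real.log (x + y) := chain
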